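/- Consider minority-regime dynamics with skew λ ≠ 1 on a graph G and i* with λ^{1-2i*} < 1. Let v₁ v₂ be an edge of G such that both n(v₁) \ {v₂} and n(v₂) \ {v₁} are nonempty and all neighbours of v₁ other than v₂ and all neighbours of v₂ other than v₁ play strategy i* at time t, while S_t(v₁) = S_t(v₂) = 1-i*. If moreover all those outside neighbours switch to 1-i* at time t+1, then S_{t+1}(v₁) = S_{t+1}(v₂) = 1-i*, i.e., v₁ and v₂ become synchronised with their outside neighbours at time t+1. -/

import Mathlib

open Finset

variable {V : Type*} [Fintype V] [DecidableEq V]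

/-- Number of neighbours of `v` playing strategy `j` under configuration `S`
(`false` = strategy 0, `true` = strategy 1). -/
def nbc (G : SimpleGraph V) [DecidableRel G.Adj] (S : V → Bool) (j : Bool) (v : V) : ℕ :=
  ((G.neighborFinset v).filter fun u => S u = j).card

/-- Best-response step for payoff matrix `q` (rows/columns: `false` = 0, `true` = 1):
a vertex switches strategy iff its alternative payoff strictly exceeds its total payoff. -/
noncomputable def brStep (q : Bool → Bool → ℝ) (G : SimpleGraph V) [DecidableRel G.Adj]
    (S : V → Bool) : V → Bool := fun v =>
  if (nbc G S false v : ℝ) * q (S v) false + (nbc G S true v : ℝ) * q (S v) true <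
      (nbc G S false v : ℝ) * q (!(S v)) false + (nbc G S true v : ℝ) * q (!(S v)) true
  then !(S v) else S v

/-- `lamPow lam i` is `lam ^ (1 - 2 i)` for `i ∈ {0,1}` (`false` = 0, `true` = 1). -/
noncomputable def lamPow (lam : ℝ) (i : Bool) : ℝ := if i then lam⁻¹ else lam

/-- Majority-regime step with skew `lam`: a vertex playing `i` switches iff
`n(v;i) < lam^(1-2i) * n(v;1-i)`. -/
noncomputable def majStep (lam : ℝ) (G : SimpleGraph V) [DecidableRel G.Adj]
    (S : V → Bool) : V → Bool := fun v =>
  if (nbc G S (S v) v : ℝ) < lamPow lam (S v) * (nbc G S (!(S v)) v : ℝ) then !(S v) else S v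

/-- Minority-regime step with skew `lam`: a vertex playing `i` switches iff
`n(v;i) > lam^(1-2i) * n(v;1-i)`. -/
noncomputable def minStep (lam : ℝ) (G : SimpleGraph V) [DecidableRel G.Adj]
    (S : V → Bool) : V → Bool := fun v =>
  if lamPow lam (S v) * (nbc G S (!(S v)) v : ℝ) < (nbc G S (S v) v : ℝ) then !(S v) else S v

/-- Majority dynamics step: adopt the state of the majority of the neighbourhood,
keeping the current state in case of a tie. -/
def majDyn (G : SimpleGraph V) [DecidableRel G.Adj] (S : V → Bool) : V → Bool := fun v =>
  if nbc G S false v < nbc G S true v then true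
  else if nbc G S true v < nbc G S false v then false
  else S v

/-- Minority dynamics step: adopt the state of the minority of the neighbourhood,
keeping the current state in case of a tie. -/
def minDyn (G : SimpleGraph V) [DecidableRel G.Adj] (S : V → Bool) : V → Bool := fun v =>
  if nbc G S false v < nbc G S true v then false
  else if nbc G S true v < nbc G S false v then true
  else S v

/-- minority regime: an edge `v₁v₂` whose endpoints both play `1 - i*` at
time `t`, while all their (existing) outside neighbours play `i*` at time `t` and switch
to `1 - i*` at time `t + 1`, has both endpoints playing `1 - i*` at time `t + 1`, i.e.
synchronised with their outside neighbours. -/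

lemma lamPow_not_gt_one {lam : ℝ} (hpos : 0 < lam) (hne : lam ≠ 1) (istar : Bool)
    (hi : lamPow lam istar = min lam lam⁻¹) : 1 < lamPow lam (!istar) := by
  have hinv : lam * lam⁻¹ = 1 := mul_inv_cancel₀ hpos.ne'
  cases istar <;> simp only [lamPow, Bool.not_false, Bool.not_true, Bool.false_eq_true,
    Bool.true_eq, if_true, if_false, ite_true, ite_false] at hi ⊢
  · -- hi : lam = min lam lam⁻¹, goal : 1 < lam⁻¹
    have hle : lam ≤ lam⁻¹ := hi.le.trans (min_le_right lam lam⁻¹)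
    have h1 : lam ≤ 1 := by nlinarith
    have h2 : lam < 1 := lt_of_le_of_ne h1 hne
    nlinarith
  · have hle : lam⁻¹ ≤ lam := hi.le.trans (min_le_left lam lam⁻¹)
    have h1 : 1 ≤ lam := by nlinarith
    exact lt_of_le_of_ne h1 (Ne.symm hne)

lemma minStep_fix {lam : ℝ} (istar : Bool) (hgt : 1 < lamPow lam (!istar))
    (G : SimpleGraph V) [DecidableRel G.Adj] (v w : V)
    (S : V → Bool)
    (hnonempty : ∃ u ∈ G.neighborFinset v, u ≠ w)
    (hout : ∀ u ∈ G.neighborFinset v, u ≠ w → S u = istar)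
    (hv : S v = !istar) : minStep lam G S v = !istar := by
  unfold minStep
  rw [hv, Bool.not_not]
  have ha : 1 ≤ nbc G S istar v := by
    obtain ⟨u, hu, hune⟩ := hnonempty
    have : u ∈ (G.neighborFinset v).filter fun x => S x = istar :=
      mem_filter.mpr ⟨hu, hout u hu hune⟩
    exact card_pos.mpr ⟨u, this⟩
  have hb : nbc G S (!istar) v ≤ 1 := by
    have hsub : ((G.neighborFinset v).filter fun x => S x = !istar) ⊆ {w} := by
      intro u hu
      rcases mem_filter.mp hu with ⟨hu1, hu2⟩
      by_contra hc
      have := hout u hu1 (by simpa using hc)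
      rw [this] at hu2
      exact (Bool.not_ne_self istar).symm hu2
    simpa [nbc] using card_le_card hsub
  have ha' : (1 : ℝ) ≤ (nbc G S istar v : ℝ) := by exact_mod_cast ha
  have hb' : (nbc G S (!istar) v : ℝ) ≤ 1 := by exact_mod_cast hb
  have hcond : ¬ lamPow lam (!istar) * (nbc G S istar v : ℝ) < (nbc G S (!istar) v : ℝ) := by
    push_neg
    nlinarith
  rw [if_neg hcond]

theorem stmt14 (lam : ℝ) (hpos : 0 < lam) (hne : lam ≠ 1) (istar : Bool)
    (hi : lamPow lam istar = min lam lam⁻¹)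
    (G : SimpleGraph V) [DecidableRel G.Adj] (v₁ v₂ : V) (hadj : G.Adj v₁ v₂)
    (S : ℕ → V → Bool) (hS : ∀ t, S (t + 1) = minStep lam G (S t)) (t : ℕ)
    (hne1 : ∃ u ∈ G.neighborFinset v₁, u ≠ v₂)
    (hne2 : ∃ u ∈ G.neighborFinset v₂, u ≠ v₁)
    (hout1 : ∀ u ∈ G.neighborFinset v₁, u ≠ v₂ → S t u = istar ∧ S (t + 1) u = !istar)
    (hout2 : ∀ u ∈ G.neighborFinset v₂, u ≠ v₁ → S t u = istar ∧ S (t + 1) u = !istar)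
    (h1 : S t v₁ = !istar) (h2 : S t v₂ = !istar) :
    S (t + 1) v₁ = !istar ∧ S (t + 1) v₂ = !istar := by
  have hgt := lamPow_not_gt_one hpos hne istar hi
  rw [hS t]
  exact ⟨minStep_fix istar hgt G v₁ v₂ (S t) hne1 (fun u hu h => (hout1 u hu h).1) h1,
    minStep_fix istar hgt G v₂ v₁ (S t) hne2 (fun u hu h => (hout2 u hu h).1) h2⟩
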